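/- Let λ ∈ ℂ ∪ {∞} and let W_B(λ) be the Lie algebra defined below. Then the second Lie algebra cohomology HH²(W_B(λ)) of W_B(λ) with trivial coefficients ℂ has dimension 3. -/

import Mathlib

set_option maxSynthPendingDepth 2
set_option linter.unreachableTactic false
set_option linter.unusedTactic false

/-- The coefficient `n(n+1)λ`, where `λ = ∞` (encoded by `none`) gives `n²`. -/
def lamTerm (lam : Option ℂ) (n : ℤ) : ℂ :=
  match lam with
  | some l => (n : ℂ) * ((n : ℂ) + 1) * l
  | none => (n : ℂ) ^ 2

/-- The space of 2-cocycles of a complex Lie algebra with trivial coefficients: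
alternating bilinear maps `Ω : L × L → ℂ` satisfying the cocycle identity. -/
noncomputable def twoCocycles (L : Type) [LieRing L] [LieAlgebra ℂ L] :
    Submodule ℂ (L →ₗ[ℂ] L →ₗ[ℂ] ℂ) where
  carrier := {Ω | (∀ x : L, Ω x x = 0) ∧
    ∀ x y z : L, Ω ⁅x, y⁆ z + Ω ⁅y, z⁆ x + Ω ⁅z, x⁆ y = 0}
  add_mem' := by
    rintro a b ⟨ha1, ha2⟩ ⟨hb1, hb2⟩
    refine ⟨fun x => ?_, fun x y z => ?_⟩
    · simp [LinearMap.add_apply, ha1 x, hb1 x]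
    · simp only [LinearMap.add_apply]
      linear_combination ha2 x y z + hb2 x y z
  zero_mem' := by
    refine ⟨fun x => by simp, fun x y z => by simp⟩
  smul_mem' := by
    rintro c a ⟨ha1, ha2⟩
    refine ⟨fun x => ?_, fun x y z => ?_⟩
    · simp [LinearMap.smul_apply, ha1 x]
    · simp only [LinearMap.smul_apply, smul_eq_mul]
      linear_combination c * ha2 x y z

/-- The space of 2-coboundaries of a complex Lie algebra with trivial coefficients:
bilinear maps of the form `(x, y) ↦ ψ ⁅x, y⁆` for a linear functional `ψ`. -/
noncomputable def twoCoboundaries (L : Type) [LieRing L] [LieAlgebra ℂ L] :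
    Submodule ℂ (L →ₗ[ℂ] L →ₗ[ℂ] ℂ) where
  carrier := {Ω | ∃ ψ : L →ₗ[ℂ] ℂ, ∀ x y : L, Ω x y = ψ ⁅x, y⁆}
  add_mem' := by
    rintro a b ⟨ψ₁, h₁⟩ ⟨ψ₂, h₂⟩
    exact ⟨ψ₁ + ψ₂, fun x y => by simp [LinearMap.add_apply, h₁ x y, h₂ x y]⟩
  zero_mem' := ⟨0, fun x y => by simp⟩
  smul_mem' := by
    rintro c a ⟨ψ, h⟩
    exact ⟨c • ψ, fun x y => by simp [LinearMap.smul_apply, h x y]⟩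


section Framework

variable {L : Type} [LieRing L] [LieAlgebra ℂ L]

/-- The bracket as a bilinear map. -/
noncomputable def brkMap (L : Type) [LieRing L] [LieAlgebra ℂ L] : L →ₗ[ℂ] L →ₗ[ℂ] L :=
  LinearMap.mk₂ ℂ (fun x y => ⁅x, y⁆) add_lie smul_lie lie_add lie_smul

@[simp] lemma brkMap_apply (x y : L) : brkMap L x y = ⁅x, y⁆ := rfl

/-- The Jacobiator of a bilinear form, as a trilinear map. -/
noncomputable def triJ (Ω : L →ₗ[ℂ] L →ₗ[ℂ] ℂ) : L →ₗ[ℂ] L →ₗ[ℂ] L →ₗ[ℂ] ℂ :=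
  LinearMap.mk₂ ℂ (fun x y => Ω ⁅x, y⁆)
    (fun x x' y => by simp [add_lie])
    (fun c x y => by simp [smul_lie])
    (fun x y y' => by simp [lie_add])
    (fun c x y => by simp [lie_smul])
  + LinearMap.mk₂ ℂ (fun x y => (Ω.flip x).comp (brkMap L y))
    (fun x x' y => by simp only [map_add, LinearMap.add_comp])
    (fun c x y => by simp only [map_smul, LinearMap.smul_comp])
    (fun x y y' => by simp only [map_add, LinearMap.comp_add])
    (fun c x y => by simp only [map_smul, LinearMap.comp_smul])
  + LinearMap.mk₂ ℂ (fun x y => (Ω.flip y).comp ((brkMap L).flip x))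
    (fun x x' y => by simp only [map_add, LinearMap.comp_add])
    (fun c x y => by simp only [map_smul, LinearMap.comp_smul])
    (fun x y y' => by simp only [map_add, LinearMap.add_comp])
    (fun c x y => by simp only [map_smul, LinearMap.smul_comp])

lemma triJ_apply (Ω : L →ₗ[ℂ] L →ₗ[ℂ] ℂ) (x y z : L) :
    triJ Ω x y z = Ω ⁅x, y⁆ z + Ω ⁅y, z⁆ x + Ω ⁅z, x⁆ y := by
  simp [triJ, LinearMap.mk₂_apply]

/-- A bilinear form that is skew and satisfies the Jacobi identity on a basis is a cocycle. -/
lemma mem_twoCocycles_of_basis {ι : Type*} (b : Module.Basis ι ℂ L) (Ω : L →ₗ[ℂ] L →ₗ[ℂ] ℂ)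
    (hskew : ∀ i j, Ω (b i) (b j) = - Ω (b j) (b i))
    (hjac : ∀ i j k, Ω ⁅b i, b j⁆ (b k) + Ω ⁅b j, b k⁆ (b i) + Ω ⁅b k, b i⁆ (b j) = 0) :
    Ω ∈ twoCocycles L := by
  have hskew' : Ω + Ω.flip = 0 := by
    apply b.ext; intro i
    apply b.ext; intro j
    simp only [LinearMap.add_apply, LinearMap.flip_apply, LinearMap.zero_apply]
    rw [hskew i j]; ring
  have halt : ∀ x : L, Ω x x = 0 := by
    intro x
    have h := LinearMap.congr_fun (LinearMap.congr_fun hskew' x) x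
    simp only [LinearMap.add_apply, LinearMap.flip_apply, LinearMap.zero_apply] at h
    linear_combination (1/2 : ℂ) * h
  refine ⟨halt, fun x y z => ?_⟩
  have hT : triJ Ω = 0 := by
    apply b.ext; intro i
    apply b.ext; intro j
    apply b.ext; intro k
    simp only [LinearMap.zero_apply]
    rw [triJ_apply]; exact hjac i j k
  have h := LinearMap.congr_fun (LinearMap.congr_fun (LinearMap.congr_fun hT x) y) z
  rw [triJ_apply] at h
  simpa using h

/-- Skewness for any cocycle. -/
lemma cocycle_skew (Ω : L →ₗ[ℂ] L →ₗ[ℂ] ℂ) (h : Ω ∈ twoCocycles L) (x y : L) :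
    Ω x y = - Ω y x := by
  obtain ⟨h1, -⟩ := h
  have h2 := h1 (x + y)
  simp only [map_add, LinearMap.add_apply] at h2
  rw [h1 x, h1 y] at h2
  linear_combination h2

/-- Bilinear form from values on a basis. -/
noncomputable def mkBil {ι : Type*} (b : Module.Basis ι ℂ L) (G : ι → ι → ℂ) :
    L →ₗ[ℂ] L →ₗ[ℂ] ℂ :=
  b.constr ℂ (fun i => b.constr ℂ (fun j => G i j))

@[simp] lemma mkBil_apply {ι : Type*} (b : Module.Basis ι ℂ L) (G : ι → ι → ℂ) (i j : ι) :
    mkBil b G (b i) (b j) = G i j := by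
  simp [mkBil, Module.Basis.constr_basis]

end Framework

lemma lemA_unique (α : ℤ → ℂ) (hodd : ∀ n : ℤ, α (-n) = - α n)
    (hrec : ∀ n m : ℤ, ((m : ℂ) - n) * α (n + m) + ((n : ℂ) + 2 * m) * α n
      - (2 * (n : ℂ) + m) * α m = 0)
    (h1 : α 1 = 0) (h2 : α 2 = 0) : ∀ n : ℤ, α n = 0 := by
  have h0 : α 0 = 0 := by
    have := hodd 0; simp only [neg_zero] at this
    linear_combination (1/2 : ℂ) * this
  have hnat : ∀ k : ℕ, α ((k : ℤ) + 2) = 0 := by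
    intro k
    induction k with
    | zero => simpa using h2
    | succ k ih =>
      have h := hrec ((k : ℤ) + 2) 1
      rw [h1, ih] at h
      have hco : ((1 : ℂ) - (((k : ℤ) + 2 : ℤ) : ℂ)) ≠ 0 := by
        push_cast
        intro hc
        have hk1 : ((k : ℂ) + 1) = 0 := by linear_combination -hc
        exact Nat.cast_add_one_ne_zero k hk1
      have hz : ((1 : ℂ) - (((k : ℤ) + 2 : ℤ) : ℂ)) * α ((k : ℤ) + 2 + 1) = 0 := by
        push_cast at h ⊢; linear_combination h
      have key := (mul_eq_zero.mp hz).resolve_left hco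
      have : ((k : ℤ) + 2 + 1) = ((k + 1 : ℕ) : ℤ) + 2 := by push_cast; ring
      rwa [this] at key
  have hnn : ∀ k : ℕ, α (k : ℤ) = 0 := by
    intro k
    match k with
    | 0 => exact h0
    | 1 => exact h1
    | (k + 2) =>
      have := hnat k
      have he : ((k : ℤ) + 2) = ((k + 2 : ℕ) : ℤ) := by push_cast; ring
      rwa [he] at this
  intro n
  rcases n.natAbs_eq with h | h
  · rw [h]; exact hnn _
  · rw [h, hodd, neg_eq_zero]; exact hnn _


lemma lemC_unique (γ : ℤ → ℂ)
    (hrec : ∀ n m : ℤ, n ≠ 0 → m ≠ 0 → ((m : ℂ) - n) * γ (n + m)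
      + ((n : ℂ) + m) * γ n - ((n : ℂ) + m) * γ m = 0)
    (h0 : γ 0 = 0) (h1 : γ 1 = 0) (h2 : γ 2 = 0) : ∀ n : ℤ, γ n = 0 := by
  have hm1 : γ (-1) = 0 := by
    have h := hrec 2 (-1) (by norm_num) (by norm_num)
    norm_num at h
    linear_combination -h - 3 * h1 + h2
  have hfwd : ∀ k : ℕ, γ ((k : ℤ) + 2) = 0 := by
    intro k
    induction k with
    | zero => simpa using h2
    | succ k ih =>
      have h := hrec ((k : ℤ) + 2) 1 (by positivity) (by norm_num)
      rw [h1, ih] at h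
      have hco : ((1 : ℂ) - (((k : ℤ) + 2 : ℤ) : ℂ)) ≠ 0 := by
        push_cast
        intro hc
        exact Nat.cast_add_one_ne_zero k (by linear_combination -hc)
      have hz : ((1 : ℂ) - (((k : ℤ) + 2 : ℤ) : ℂ)) * γ ((k : ℤ) + 2 + 1) = 0 := by
        push_cast at h ⊢; linear_combination h
      have key := (mul_eq_zero.mp hz).resolve_left hco
      have he : ((k : ℤ) + 2 + 1) = ((k + 1 : ℕ) : ℤ) + 2 := by push_cast; ring
      rwa [he] at key
  have hm2 : γ (-2) = 0 := by
    have ha := hrec (-1) (-2) (by norm_num) (by norm_num)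
    have hb := hrec 1 (-3) (by norm_num) (by norm_num)
    norm_num at ha hb
    linear_combination (1/2 : ℂ) * hb + ha + h1 + 3*hm1
  have hbwd : ∀ k : ℕ, γ (-2 - (k : ℤ)) = 0 := by
    intro k
    induction k with
    | zero => simpa using hm2
    | succ k ih =>
      have h := hrec (-1) (-2 - (k : ℤ)) (by norm_num) (by omega)
      rw [hm1, ih] at h
      have hco : ((-2 - (k : ℤ) : ℤ) : ℂ) - ((-1 : ℤ) : ℂ) ≠ 0 := by
        push_cast
        intro hc
        exact Nat.cast_add_one_ne_zero k (by linear_combination -hc)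
      have hz : (((-2 - (k : ℤ) : ℤ) : ℂ) - ((-1 : ℤ) : ℂ)) * γ (-1 + (-2 - (k : ℤ))) = 0 := by
        push_cast at h ⊢; linear_combination h
      have key := (mul_eq_zero.mp hz).resolve_left hco
      have he : (-1 + (-2 - (k : ℤ))) = -2 - ((k + 1 : ℕ) : ℤ) := by push_cast; ring
      rwa [he] at key
  intro n
  rcases lt_trichotomy n 0 with hn | hn | hn
  · rcases Int.lt_or_le n (-1) with hn2 | hn2
    · obtain ⟨k, hk⟩ : ∃ k : ℕ, n = -2 - (k : ℤ) := ⟨(-2 - n).toNat, by omega⟩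
      rw [hk]; exact hbwd k
    · have : n = -1 := by omega
      rw [this]; exact hm1
  · rw [hn]; exact h0
  · rcases Int.lt_or_le n 2 with hn2 | hn2
    · have : n = 1 := by omega
      rw [this]; exact h1
    · obtain ⟨k, hk⟩ : ∃ k : ℕ, n = (k : ℤ) + 2 := ⟨(n - 2).toNat, by omega⟩
      rw [hk]; exact hfwd k

lemma lamTerm_zero (lam : Option ℂ) : lamTerm lam 0 = 0 := by
  cases lam <;> simp [lamTerm]

/-- Coefficients of the second invariant functional. -/
def pco : Option ℂ → ℂ := fun lam => match lam with | some l => 6*l+2 | none => 3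
def qco : Option ℂ → ℂ := fun lam => match lam with | some l => -(2*l+1) | none => -1

/-- The structure coefficient of `⁅L_n, B_k⁆`. -/
def gco (lam : Option ℂ) (n k : ℤ) : ℂ :=
  (k : ℂ) - (if n + k = 0 then lamTerm lam n else 0)

section Rels

variable {lam : Option ℂ} {L : Type} [LieRing L] [LieAlgebra ℂ L]
  (b : Module.Basis (ℤ ⊕ ℤ) ℂ L)
  (hLL : ∀ n m : ℤ,
    ⁅b (Sum.inl n), b (Sum.inl m)⁆ = ((m : ℂ) - (n : ℂ)) • b (Sum.inl (n + m)))
  (hLB : ∀ n m : ℤ,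
    ⁅b (Sum.inl n), b (Sum.inr m)⁆ =
      ((m : ℂ) - (if n + m = 0 then lamTerm lam n else 0)) • b (Sum.inr (n + m)))
  (hBB : ∀ n m : ℤ, ⁅b (Sum.inr n), b (Sum.inr m)⁆ = 0)
  (Ω : L →ₗ[ℂ] L →ₗ[ℂ] ℂ) (hΩ : Ω ∈ twoCocycles L)

set_option linter.unusedSectionVars false

include hLL hLB hBB hΩ

lemma relEEE (n m k : ℤ) :
    ((m : ℂ) - n) * Ω (b (Sum.inl (n + m))) (b (Sum.inl k))
    + ((k : ℂ) - m) * Ω (b (Sum.inl (m + k))) (b (Sum.inl n))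
    + ((n : ℂ) - k) * Ω (b (Sum.inl (k + n))) (b (Sum.inl m)) = 0 := by
  have h := hΩ.2 (b (Sum.inl n)) (b (Sum.inl m)) (b (Sum.inl k))
  rw [hLL n m, hLL m k, hLL k n] at h
  simpa only [map_smul, LinearMap.smul_apply, smul_eq_mul] using h

lemma relEEB (n m k : ℤ) :
    ((m : ℂ) - n) * Ω (b (Sum.inl (n + m))) (b (Sum.inr k))
    - gco lam m k * Ω (b (Sum.inl n)) (b (Sum.inr (m + k)))
    + gco lam n k * Ω (b (Sum.inl m)) (b (Sum.inr (n + k))) = 0 := by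
  have h := hΩ.2 (b (Sum.inl n)) (b (Sum.inl m)) (b (Sum.inr k))
  rw [hLL n m, hLB m k, (lie_skew (b (Sum.inr k)) (b (Sum.inl n))).symm, hLB n k] at h
  simp only [map_smul, map_neg, LinearMap.smul_apply, LinearMap.neg_apply, smul_eq_mul] at h
  rw [cocycle_skew Ω hΩ (b (Sum.inr (m + k))) (b (Sum.inl n)),
    cocycle_skew Ω hΩ (b (Sum.inr (n + k))) (b (Sum.inl m))] at h
  unfold gco
  linear_combination h

lemma relEBB (n m k : ℤ) :
    gco lam n m * Ω (b (Sum.inr (n + m))) (b (Sum.inr k))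
    - gco lam n k * Ω (b (Sum.inr (n + k))) (b (Sum.inr m)) = 0 := by
  have h := hΩ.2 (b (Sum.inl n)) (b (Sum.inr m)) (b (Sum.inr k))
  rw [hLB n m, hBB m k, (lie_skew (b (Sum.inr k)) (b (Sum.inl n))).symm, hLB n k] at h
  simp only [map_smul, map_neg, map_zero, LinearMap.smul_apply, LinearMap.neg_apply,
    LinearMap.zero_apply, smul_eq_mul] at h
  unfold gco
  linear_combination h

lemma alpha_rec (n m : ℤ) :
    ((m : ℂ) - n) * Ω (b (Sum.inl (n + m))) (b (Sum.inl (-(n + m))))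
    + ((n : ℂ) + 2 * m) * Ω (b (Sum.inl n)) (b (Sum.inl (-n)))
    - (2 * (n : ℂ) + m) * Ω (b (Sum.inl m)) (b (Sum.inl (-m))) = 0 := by
  have h := relEEE b hLL hLB hBB Ω hΩ n m (-(n + m))
  rw [show m + -(n + m) = -n from by ring, show -(n + m) + n = -m from by ring] at h
  push_cast at h
  linear_combination h
    + ((n : ℂ) + 2*m) * cocycle_skew Ω hΩ (b (Sum.inl (-n))) (b (Sum.inl n))
    - (2*(n : ℂ) + m) * cocycle_skew Ω hΩ (b (Sum.inl (-m))) (b (Sum.inl m))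

lemma relIA (n m : ℤ) :
    ((n : ℂ) + m) * Ω (b (Sum.inl n)) (b (Sum.inl m))
      = ((n : ℂ) - m) * Ω (b (Sum.inl (n + m))) (b (Sum.inl 0)) := by
  have h := relEEE b hLL hLB hBB Ω hΩ n m 0
  rw [show m + (0:ℤ) = m from by ring, show (0:ℤ) + n = n from by ring] at h
  push_cast at h
  linear_combination h + (m : ℂ) * cocycle_skew Ω hΩ (b (Sum.inl m)) (b (Sum.inl n))

lemma gamma_rec (n m : ℤ) :
    ((m : ℂ) - n) * Ω (b (Sum.inl (n + m))) (b (Sum.inr (-(n + m))))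
    + ((n : ℂ) + m + (if n = 0 then lamTerm lam m else 0)) * Ω (b (Sum.inl n)) (b (Sum.inr (-n)))
    - ((n : ℂ) + m + (if m = 0 then lamTerm lam n else 0)) * Ω (b (Sum.inl m)) (b (Sum.inr (-m)))
      = 0 := by
  have h := relEEB b hLL hLB hBB Ω hΩ n m (-(n + m))
  unfold gco at h
  rw [show m + -(n + m) = -n from by ring, show n + -(n + m) = -m from by ring,
    ] at h
  simp only [neg_eq_zero] at h
  push_cast at h
  linear_combination h

lemma relIC (n k : ℤ) :
    ((n : ℂ) + k) * Ω (b (Sum.inl n)) (b (Sum.inr k))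
      = gco lam n k * Ω (b (Sum.inl 0)) (b (Sum.inr (n + k))) := by
  have h := relEEB b hLL hLB hBB Ω hΩ n 0 k
  rw [show n + (0:ℤ) = n from by ring, show (0:ℤ) + k = k from by ring] at h
  have h0 : gco lam 0 k = (k : ℂ) := by
    unfold gco
    rw [show (0:ℤ) + k = k from by ring, lamTerm_zero]
    split <;> ring
  rw [h0] at h
  push_cast at h
  linear_combination -h

lemma relD_offdiag (m k : ℤ) (hmk : m + k ≠ 0) :
    Ω (b (Sum.inr m)) (b (Sum.inr k)) = 0 := by
  have h := relEBB b hLL hLB hBB Ω hΩ 0 m k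
  have h0 : ∀ j : ℤ, gco lam 0 j = (j : ℂ) := by
    intro j
    unfold gco
    rw [show (0:ℤ) + j = j from by ring, lamTerm_zero]
    split <;> ring
  rw [h0 m, h0 k, show (0:ℤ) + m = m from by ring, show (0:ℤ) + k = k from by ring] at h
  have hsk := cocycle_skew Ω hΩ (b (Sum.inr k)) (b (Sum.inr m))
  have hco : ((m : ℂ) + k) ≠ 0 := by
    rw [show ((m : ℂ) + k) = ((m + k : ℤ) : ℂ) from by push_cast; ring]
    exact_mod_cast Int.cast_ne_zero.mpr hmk
  have : ((m : ℂ) + k) * Ω (b (Sum.inr m)) (b (Sum.inr k)) = 0 := by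
    linear_combination h + (k : ℂ) * hsk
  exact (mul_eq_zero.mp this).resolve_left hco

lemma relD_diag (n : ℤ) :
    Ω (b (Sum.inr n)) (b (Sum.inr (-n)))
      = (n : ℂ) * Ω (b (Sum.inr 1)) (b (Sum.inr (-1))) := by
  rcases eq_or_ne n 0 with rfl | hn
  · simpa using hΩ.1 (b (Sum.inr 0))
  · have h := relEBB b hLL hLB hBB Ω hΩ (n - 1) 1 (-n)
    rw [show n - 1 + 1 = n from by ring, show n - 1 + -n = -1 from by ring] at h
    have h1 : gco lam (n - 1) 1 = 1 := by
      unfold gco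
      rw [show n - 1 + 1 = n from by ring, if_neg hn]
      ring
    have h2 : gco lam (n - 1) (-n) = -(n : ℂ) := by
      unfold gco
      rw [show n - 1 + -n = -1 from by ring, if_neg (by norm_num : (-1 : ℤ) ≠ 0)]
      push_cast; ring
    rw [h1, h2] at h
    have hsk := cocycle_skew Ω hΩ (b (Sum.inr (-1))) (b (Sum.inr 1))
    linear_combination h - (n : ℂ) * hsk

lemma gamma_zero :
    Ω (b (Sum.inl 0)) (b (Sum.inr 0)) = 0 := by
  cases lam with
  | some l =>
    have h := gamma_rec b hLL hLB hBB Ω hΩ 0 (-1)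
    rw [show (0:ℤ) + -1 = -1 from by ring] at h
    simp only [if_pos rfl, if_neg (by norm_num : (-1:ℤ) ≠ 0), neg_neg, neg_zero] at h
    have hl : lamTerm (some l) (-1) = 0 := by
      simp [lamTerm]
    rw [hl] at h
    push_cast at h
    linear_combination -h
  | none =>
    have h := gamma_rec b hLL hLB hBB Ω hΩ 0 1
    rw [show (0:ℤ) + 1 = 1 from by ring] at h
    simp only [if_pos rfl, if_neg (by norm_num : (1:ℤ) ≠ 0), neg_zero] at h
    have hl : lamTerm none 1 = 1 := by simp [lamTerm]
    rw [hl] at h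
    push_cast at h
    linear_combination (1/2 : ℂ) * h

/-- Any cocycle on which the three invariant functionals vanish is a coboundary. -/
lemma cobound_of_phis
    (hphi1 : Ω (b (Sum.inl 2)) (b (Sum.inl (-2))) - 2 * Ω (b (Sum.inl 1)) (b (Sum.inl (-1))) = 0)
    (hphi2 : pco lam * Ω (b (Sum.inl 1)) (b (Sum.inr (-1)))
      + qco lam * Ω (b (Sum.inl 2)) (b (Sum.inr (-2))) = 0)
    (hphi3 : Ω (b (Sum.inr 1)) (b (Sum.inr (-1))) = 0) :
    ∃ ψ : L →ₗ[ℂ] ℂ, ∀ x y : L, Ω x y = ψ ⁅x, y⁆ := by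
  classical
  set α : ℤ → ℂ := fun n => Ω (b (Sum.inl n)) (b (Sum.inl (-n))) with hα
  set γ : ℤ → ℂ := fun n => Ω (b (Sum.inl n)) (b (Sum.inr (-n))) with hγ
  -- Step A : α is linear
  have halin : ∀ n : ℤ, α n = α 1 * n := by
    have hβ := lemA_unique (fun n => α n - α 1 * n) ?_ ?_ ?_ ?_
    · intro n
      have := hβ n
      linear_combination this
    · intro n
      have hsk := cocycle_skew Ω hΩ (b (Sum.inl (-n))) (b (Sum.inl n))
      simp only [hα, neg_neg]
      push_cast
      linear_combination hsk
    · intro n m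
      have h := alpha_rec b hLL hLB hBB Ω hΩ n m
      simp only [hα]
      push_cast
      linear_combination h
    · simp
    · simp only [hα]
      push_cast
      linear_combination hphi1
  -- Step C : γ is a coboundary shape
  have hg0 : γ 0 = 0 := by
    simpa [hγ] using gamma_zero b hLL hLB hBB Ω hΩ
  set bb : ℂ := (γ 2 - 2 * γ 1) / 2 with hbb
  set aa : ℂ := γ 1 - bb with haa
  have hspan : ∀ n : ℤ, γ n = aa * n + bb * n ^ 2 := by
    have hβ := lemC_unique (fun n => γ n - aa * n - bb * n ^ 2) ?_ ?_ ?_ ?_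
    · intro n
      have := hβ n
      linear_combination this
    · intro n m hn hm
      have h := gamma_rec b hLL hLB hBB Ω hΩ n m
      rw [if_neg hn, if_neg hm] at h
      simp only [hγ] at h ⊢
      push_cast
      linear_combination h
    · simp [hg0]
    · simp only [haa]; ring
    · simp only [haa, hbb]; push_cast; ring
  obtain ⟨c0, hc0⟩ : ∃ c0 : ℂ, ∀ n : ℤ, γ n = (-(n : ℂ) - lamTerm lam n) * c0 := by
    cases lam with
    | some l =>
      refine ⟨bb - aa, fun n => ?_⟩
      have hl : l * aa - (1 + l) * bb = 0 := by
        have h2 : pco (some l) = 6*l+2 := rfl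
        have h3 : qco (some l) = -(2*l+1) := rfl
        rw [h2, h3] at hphi2
        have e1 : Ω (b (Sum.inl 1)) (b (Sum.inr (-1))) = γ 1 := rfl
        have e2 : Ω (b (Sum.inl 2)) (b (Sum.inr (-2))) = γ 2 := rfl
        rw [e1, e2] at hphi2
        simp only [haa, hbb] at *
        linear_combination (1/2 : ℂ) * hphi2
      have hlt : lamTerm (some l) n = (n:ℂ) * ((n:ℂ)+1) * l := rfl
      rw [hlt]
      linear_combination hspan n - ((n:ℂ) + (n:ℂ)^2) * hl
    | none =>
      refine ⟨-aa, fun n => ?_⟩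
      have hl : aa - bb = 0 := by
        have h2 : pco none = 3 := rfl
        have h3 : qco none = -1 := rfl
        rw [h2, h3] at hphi2
        have e1 : Ω (b (Sum.inl 1)) (b (Sum.inr (-1))) = γ 1 := rfl
        have e2 : Ω (b (Sum.inl 2)) (b (Sum.inr (-2))) = γ 2 := rfl
        rw [e1, e2] at hphi2
        simp only [haa, hbb] at *
        linear_combination hphi2
      have hlt : lamTerm none n = (n:ℂ)^2 := rfl
      rw [hlt]
      linear_combination hspan n - (n:ℂ)^2 * hl
  -- Step D
  have hDdiag : ∀ n : ℤ, Ω (b (Sum.inr n)) (b (Sum.inr (-n))) = 0 := by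
    intro n
    rw [relD_diag b hLL hLB hBB Ω hΩ n, hphi3, mul_zero]
  -- Construct ψ
  set v : ℤ ⊕ ℤ → ℂ := fun i =>
    match i with
    | Sum.inl n => if n = 0 then - α 1 / 2 else - Ω (b (Sum.inl n)) (b (Sum.inl 0)) / n
    | Sum.inr n => if n = 0 then c0 else Ω (b (Sum.inl 0)) (b (Sum.inr n)) / n
    with hv
  set ψ : L →ₗ[ℂ] ℂ := b.constr ℂ v with hψ
  have hψb : ∀ i, ψ (b i) = v i := fun i => b.constr_basis ℂ v i
  -- key case 2
  have key2 : ∀ n m : ℤ, Ω (b (Sum.inl n)) (b (Sum.inr m)) = ψ ⁅b (Sum.inl n), b (Sum.inr m)⁆ := by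
    intro n m
    rw [hLB n m, map_smul, hψb, smul_eq_mul]
    rcases eq_or_ne (n + m) 0 with h0 | h0
    · have hm : m = -n := by omega
      subst hm
      simp only [hv]
      rw [if_pos h0, if_pos h0]
      have := hc0 n
      simp only [hγ] at this
      push_cast
      linear_combination this
    · rw [if_neg h0]
      simp only [hv]
      rw [if_neg h0]
      have hIC := relIC b hLL hLB hBB Ω hΩ n m
      unfold gco at hIC
      rw [if_neg h0] at hIC
      have hnm : ((n + m : ℤ) : ℂ) ≠ 0 := Int.cast_ne_zero.mpr h0
      push_cast at hIC hnm ⊢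
      field_simp [hnm]
      linear_combination hIC
  refine ⟨ψ, fun x y => ?_⟩
  have hbil : Ω = (brkMap L).compr₂ ψ := by
    apply b.ext; intro i
    apply b.ext; intro j
    simp only [LinearMap.compr₂_apply, brkMap_apply]
    match i, j with
    | Sum.inl n, Sum.inl m =>
      rw [hLL n m, map_smul, hψb, smul_eq_mul]
      rcases eq_or_ne (n + m) 0 with h0 | h0
      · have hm : m = -n := by omega
        subst hm
        simp only [hv]
        rw [if_pos h0]
        have := halin n
        simp only [hα] at this
        push_cast
        linear_combination this
      · simp only [hv]
        rw [if_neg h0]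
        have hIA := relIA b hLL hLB hBB Ω hΩ n m
        have hnm : ((n + m : ℤ) : ℂ) ≠ 0 := Int.cast_ne_zero.mpr h0
        push_cast at hIA hnm ⊢
        field_simp [hnm]
        linear_combination hIA
    | Sum.inl n, Sum.inr m => exact key2 n m
    | Sum.inr n, Sum.inl m =>
      rw [show ⁅b (Sum.inr n), b (Sum.inl m)⁆ = -⁅b (Sum.inl m), b (Sum.inr n)⁆ from
        (lie_skew (b (Sum.inr n)) (b (Sum.inl m))).symm, map_neg]
      rw [cocycle_skew Ω hΩ (b (Sum.inr n)) (b (Sum.inl m)), key2 m n]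
    | Sum.inr n, Sum.inr m =>
      rw [hBB n m, map_zero]
      rcases eq_or_ne (n + m) 0 with h0 | h0
      · have hm : m = -n := by omega
        subst hm
        exact hDdiag n
      · exact relD_offdiag b hLL hLB hBB Ω hΩ n m h0
  rw [hbil]
  rfl

/-- Diagonal seed for the `L-B` cocycle. -/
def gam0 (lam : Option ℂ) (n : ℤ) : ℂ :=
  match lam with
  | some _ => (n : ℂ) + (n : ℂ) ^ 2
  | none => (n : ℂ) ^ 2

/-- Module.Basis coefficients of the Virasoro cocycle. -/
def GA : ℤ ⊕ ℤ → ℤ ⊕ ℤ → ℂ := fun i j =>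
  match i, j with
  | Sum.inl n, Sum.inl m => if n + m = 0 then (n : ℂ) ^ 3 else 0
  | _, _ => 0

/-- Module.Basis coefficients of the `L-B` cocycle. -/
def GC (lam : Option ℂ) : ℤ ⊕ ℤ → ℤ ⊕ ℤ → ℂ := fun i j =>
  match i, j with
  | Sum.inl n, Sum.inr m => if n + m = 0 then gam0 lam n else 0
  | Sum.inr m, Sum.inl n => -(if n + m = 0 then gam0 lam n else 0)
  | _, _ => 0

/-- Module.Basis coefficients of the `B-B` cocycle. -/
def GD : ℤ ⊕ ℤ → ℤ ⊕ ℤ → ℂ := fun i j =>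
  match i, j with
  | Sum.inr n, Sum.inr m => if n + m = 0 then (n : ℂ) else 0
  | _, _ => 0


omit hLL hBB hΩ in
lemma hBL (n m : ℤ) :
    ⁅b (Sum.inr n), b (Sum.inl m)⁆
      = -(((n : ℂ) - if m + n = 0 then lamTerm lam m else 0) • b (Sum.inr (m + n))) := by
  rw [show ⁅b (Sum.inr n), b (Sum.inl m)⁆ = -⁅b (Sum.inl m), b (Sum.inr n)⁆ from
    (lie_skew _ _).symm, hLB m n]

set_option maxHeartbeats 2000000 in
omit hΩ in
lemma memA : mkBil b GA ∈ twoCocycles L := by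
  apply mem_twoCocycles_of_basis b
  · rintro (n | n) (m | m) <;> simp only [mkBil_apply, GA] <;> try simp
    split_ifs with h1 h2
    · have hm : m = -n := by omega
      subst hm; push_cast; ring
    · exfalso; omega
    · exfalso; omega
    · simp
  · rintro (n | n) (m | m) (k | k) <;>
      simp only [hLL, hLB, hBL b hLB, hBB, map_smul, map_neg, map_zero, LinearMap.smul_apply,
        LinearMap.neg_apply, LinearMap.zero_apply, smul_eq_mul, mkBil_apply, GA] <;>
      (try split_ifs) <;>
      first
        | (push_cast; ring1)
        | (exfalso; omega)
        | (have h : k = -n - m := by omega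
           subst h
           try (have hn : n = 0 := by omega); try subst hn
           try (have hm : m = 0 := by omega); try subst hm
           try (have hq : n = -m := by omega); try subst hq
           push_cast; ring1)
        | (have h : m = -n - k := by omega
           subst h
           try (have hn : n = 0 := by omega); try subst hn
           try (have hk : k = 0 := by omega); try subst hk
           try (have hq : n = -k := by omega); try subst hq
           push_cast; ring1)
        | (have h : n = -m - k := by omega
           subst h
           try (have hm : m = 0 := by omega); try subst hm
           try (have hk : k = 0 := by omega); try subst hk
           try (have hq : m = -k := by omega); try subst hq
           push_cast; ring1)

set_option maxHeartbeats 2000000 in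
omit hΩ in
lemma memC : mkBil b (GC lam) ∈ twoCocycles L := by
  apply mem_twoCocycles_of_basis b
  · rintro (n | n) (m | m) <;> simp only [mkBil_apply, GC] <;> simp
  · cases lam with
    | some l =>
      rintro (n | n) (m | m) (k | k) <;>
        simp only [hLL, hLB, hBL b hLB, hBB, map_smul, map_neg, map_zero, LinearMap.smul_apply,
          LinearMap.neg_apply, LinearMap.zero_apply, smul_eq_mul, mkBil_apply, GC, gam0, lamTerm] <;>
        (try split_ifs) <;>
        first
          | (push_cast; ring1)
          | (exfalso; omega)
          | (have h : k = -n - m := by omega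
             subst h
             try (have hn : n = 0 := by omega); try subst hn
             try (have hm : m = 0 := by omega); try subst hm
             try (have hq : n = -m := by omega); try subst hq
             push_cast; ring1)
          | (have h : m = -n - k := by omega
             subst h
             try (have hn : n = 0 := by omega); try subst hn
             try (have hk : k = 0 := by omega); try subst hk
             try (have hq : n = -k := by omega); try subst hq
             push_cast; ring1)
          | (have h : n = -m - k := by omega
             subst h
             try (have hm : m = 0 := by omega); try subst hm
             try (have hk : k = 0 := by omega); try subst hk
             try (have hq : m = -k := by omega); try subst hq
             push_cast; ring1)
    | none =>
      rintro (n | n) (m | m) (k | k) <;>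
        simp only [hLL, hLB, hBL b hLB, hBB, map_smul, map_neg, map_zero, LinearMap.smul_apply,
          LinearMap.neg_apply, LinearMap.zero_apply, smul_eq_mul, mkBil_apply, GC, gam0, lamTerm] <;>
        (try split_ifs) <;>
        first
          | (push_cast; ring1)
          | (exfalso; omega)
          | (have h : k = -n - m := by omega
             subst h
             try (have hn : n = 0 := by omega); try subst hn
             try (have hm : m = 0 := by omega); try subst hm
             try (have hq : n = -m := by omega); try subst hq
             push_cast; ring1)
          | (have h : m = -n - k := by omega
             subst h
             try (have hn : n = 0 := by omega); try subst hn
             try (have hk : k = 0 := by omega); try subst hk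
             try (have hq : n = -k := by omega); try subst hq
             push_cast; ring1)
          | (have h : n = -m - k := by omega
             subst h
             try (have hm : m = 0 := by omega); try subst hm
             try (have hk : k = 0 := by omega); try subst hk
             try (have hq : m = -k := by omega); try subst hq
             push_cast; ring1)

set_option maxHeartbeats 2000000 in
omit hΩ in
lemma memD : mkBil b GD ∈ twoCocycles L := by
  apply mem_twoCocycles_of_basis b
  · rintro (n | n) (m | m) <;> simp only [mkBil_apply, GD] <;> try simp
    split_ifs with h1 h2
    · have hm : m = -n := by omega
      subst hm; push_cast; ring
    · exfalso; omega
    · exfalso; omega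
    · simp
  · rintro (n | n) (m | m) (k | k) <;>
      simp only [hLL, hLB, hBL b hLB, hBB, map_smul, map_neg, map_zero, LinearMap.smul_apply,
        LinearMap.neg_apply, LinearMap.zero_apply, smul_eq_mul, mkBil_apply, GD] <;>
      (try split_ifs) <;>
      first
        | (push_cast; ring1)
        | (exfalso; omega)
        | (have h : k = -n - m := by omega
           subst h
           try (have hn : n = 0 := by omega); try subst hn
           try (have hm : m = 0 := by omega); try subst hm
           try (have hq : n = -m := by omega); try subst hq
           push_cast; ring1)
        | (have h : m = -n - k := by omega
           subst h
           try (have hn : n = 0 := by omega); try subst hn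
           try (have hk : k = 0 := by omega); try subst hk
           try (have hq : n = -k := by omega); try subst hq
           push_cast; ring1)
        | (have h : n = -m - k := by omega
           subst h
           try (have hm : m = 0 := by omega); try subst hm
           try (have hk : k = 0 := by omega); try subst hk
           try (have hq : m = -k := by omega); try subst hq
           push_cast; ring1)
omit hΩ in
lemma cob_phi1 (ψ : L →ₗ[ℂ] ℂ) (hψ : ∀ x y : L, Ω x y = ψ ⁅x, y⁆) :
    Ω (b (Sum.inl 2)) (b (Sum.inl (-2))) - 2 * Ω (b (Sum.inl 1)) (b (Sum.inl (-1))) = 0 := by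
  rw [hψ, hψ, hLL 2 (-2), hLL 1 (-1)]
  norm_num
  ring

omit hΩ in
lemma cob_phi2 (ψ : L →ₗ[ℂ] ℂ) (hψ : ∀ x y : L, Ω x y = ψ ⁅x, y⁆) :
    pco lam * Ω (b (Sum.inl 1)) (b (Sum.inr (-1)))
      + qco lam * Ω (b (Sum.inl 2)) (b (Sum.inr (-2))) = 0 := by
  rw [hψ, hψ, hLB 1 (-1), hLB 2 (-2)]
  rw [if_pos (by norm_num : (1:ℤ) + -1 = 0), if_pos (by norm_num : (2:ℤ) + -2 = 0)]
  rw [show (1:ℤ) + -1 = 0 from by norm_num, show (2:ℤ) + -2 = 0 from by norm_num]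
  simp only [map_smul, smul_eq_mul]
  cases lam with
  | some l =>
    have e1 : lamTerm (some l) 1 = 2 * l := by norm_num [lamTerm]
    have e2 : lamTerm (some l) 2 = 6 * l := by norm_num [lamTerm]
    rw [e1, e2]
    show (6*l+2) * _ + (-(2*l+1)) * _ = 0
    push_cast
    ring
  | none =>
    have e1 : lamTerm none 1 = 1 := by simp [lamTerm]
    have e2 : lamTerm none 2 = 4 := by norm_num [lamTerm]
    rw [e1, e2]
    show (3:ℂ) * _ + (-1) * _ = 0
    push_cast
    ring

omit hΩ in
lemma cob_phi3 (ψ : L →ₗ[ℂ] ℂ) (hψ : ∀ x y : L, Ω x y = ψ ⁅x, y⁆) :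
    Ω (b (Sum.inr 1)) (b (Sum.inr (-1))) = 0 := by
  rw [hψ, hBB]
  simp

end Rels

/-- Nonzero normalisation constant `φ₂` of the `L-B` cocycle. -/
def F0 : Option ℂ → ℂ := fun lam => match lam with | some _ => -2 | none => -1

lemma F0_ne (lam : Option ℂ) : F0 lam ≠ 0 := by
  cases lam <;> simp [F0] <;> norm_num

/-- The invariant-functionals map on cocycles. -/
noncomputable def PhiMap (lam : Option ℂ) {L : Type} [LieRing L] [LieAlgebra ℂ L]
    (b : Module.Basis (ℤ ⊕ ℤ) ℂ L) : ↥(twoCocycles L) →ₗ[ℂ] (Fin 3 → ℂ) where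
  toFun Ω := ![(Ω : L →ₗ[ℂ] L →ₗ[ℂ] ℂ) (b (Sum.inl 2)) (b (Sum.inl (-2)))
      - 2 * (Ω : L →ₗ[ℂ] L →ₗ[ℂ] ℂ) (b (Sum.inl 1)) (b (Sum.inl (-1))),
    pco lam * (Ω : L →ₗ[ℂ] L →ₗ[ℂ] ℂ) (b (Sum.inl 1)) (b (Sum.inr (-1)))
      + qco lam * (Ω : L →ₗ[ℂ] L →ₗ[ℂ] ℂ) (b (Sum.inl 2)) (b (Sum.inr (-2))),
    (Ω : L →ₗ[ℂ] L →ₗ[ℂ] ℂ) (b (Sum.inr 1)) (b (Sum.inr (-1)))]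
  map_add' Ω Ω' := by
    funext i
    fin_cases i <;>
      simp [Matrix.cons_val_zero, Matrix.cons_val_one, Submodule.coe_add,
        LinearMap.add_apply] <;> ring
  map_smul' c Ω := by
    funext i
    fin_cases i <;>
      simp [Matrix.cons_val_zero, Matrix.cons_val_one, Submodule.coe_smul,
        LinearMap.smul_apply, smul_eq_mul] <;> ring

/-- the second Lie algebra cohomology of `W_B(λ)` with trivial coefficients
has dimension `3` for every `λ ∈ ℂ ∪ {∞}`. -/
theorem stmt_9 (lam : Option ℂ) (L : Type) [LieRing L] [LieAlgebra ℂ L]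
    (b : Module.Basis (ℤ ⊕ ℤ) ℂ L)
    (hLL : ∀ n m : ℤ,
      ⁅b (Sum.inl n), b (Sum.inl m)⁆ = ((m : ℂ) - (n : ℂ)) • b (Sum.inl (n + m)))
    (hLB : ∀ n m : ℤ,
      ⁅b (Sum.inl n), b (Sum.inr m)⁆ =
        ((m : ℂ) - (if n + m = 0 then lamTerm lam n else 0)) • b (Sum.inr (n + m)))
    (hBB : ∀ n m : ℤ, ⁅b (Sum.inr n), b (Sum.inr m)⁆ = 0) :
    Module.finrank ℂ
      (↥(twoCocycles L) ⧸ ((twoCoboundaries L).comap (twoCocycles L).subtype)) = 3 := by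
  classical
  have hker : (twoCoboundaries L).comap (twoCocycles L).subtype
      = LinearMap.ker (PhiMap lam b) := by
    ext Ω
    simp only [Submodule.mem_comap, Submodule.subtype_apply, LinearMap.mem_ker]
    constructor
    · rintro ⟨ψ, hψ⟩
      funext i
      fin_cases i <;>
        simp only [PhiMap, LinearMap.coe_mk, AddHom.coe_mk, Fin.isValue, Matrix.cons_val_zero,
          Matrix.cons_val_one, Matrix.head_cons, Matrix.cons_val_two, Matrix.tail_cons,
          Pi.zero_apply, Fin.mk_one, Fin.mk_zero]
      · exact cob_phi1 b hLL hLB hBB Ω.1 ψ hψ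
      · exact cob_phi2 b hLL hLB hBB Ω.1 ψ hψ
      · exact cob_phi3 b hLL hLB hBB Ω.1 ψ hψ
    · intro h
      have e0 := congrFun h 0
      have e1 := congrFun h 1
      have e2 := congrFun h 2
      simp only [PhiMap, LinearMap.coe_mk, AddHom.coe_mk, Fin.isValue, Matrix.cons_val_zero,
        Matrix.cons_val_one, Matrix.head_cons, Matrix.cons_val_two, Matrix.tail_cons,
        Pi.zero_apply] at e0 e1 e2
      exact cobound_of_phis b hLL hLB hBB Ω.1 Ω.2 e0 e1 e2
  have hsurj : Function.Surjective (PhiMap lam b) := by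
    intro c
    refine ⟨(c 0 / 6) • ⟨_, memA b hLL hLB hBB⟩ + (c 1 / F0 lam) • ⟨_, memC b hLL hLB hBB⟩
      + c 2 • ⟨_, memD b hLL hLB hBB⟩, ?_⟩
    funext i
    fin_cases i <;>
      simp only [PhiMap, LinearMap.coe_mk, AddHom.coe_mk, Fin.isValue, Matrix.cons_val_zero,
        Matrix.cons_val_one, Matrix.head_cons, Matrix.cons_val_two, Matrix.tail_cons,
        Submodule.coe_add, Submodule.coe_smul, LinearMap.add_apply, LinearMap.smul_apply,
        smul_eq_mul, mkBil_apply, Fin.mk_one, Fin.mk_zero]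
    · norm_num [GA, GC, GD]
      ring
    · cases lam with
      | some l =>
        norm_num [GA, GC, GD, gam0, pco, qco, F0]
        ring
      | none =>
        norm_num [GA, GC, GD, gam0, pco, qco, F0]
        ring
    · norm_num [GA, GC, GD]
      try rfl
  rw [hker]
  exact (LinearEquiv.finrank_eq
    ((PhiMap lam b).quotKerEquivOfSurjective hsurj)).trans (Module.finrank_fin_fun ℂ)
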